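/- Let k ≥ 1 be an integer and M, O, L, ΔO nonnegative reals with ΔO = (3/2)L − O and M ≤ O/k. If ΔO ≥ (6−k)L/(2(7k+2)), then 2M + 7O ≤ 11L. -/
import Mathlib


/-- Main-claim lemma, second part: for a `k`-cycle, a lower bound on the overlap
deficit `ΔO` implies `2M + 7O ≤ 11L`. -/
theorem deficit_implies_bound (k : ℕ) (M O L ΔO : ℝ)
    (hk : 1 ≤ k) (hM : 0 ≤ M) (hO : 0 ≤ O) (hL : 0 ≤ L) (hΔO : 0 ≤ ΔO)
    (hdef : ΔO = 3 / 2 * L - O) (hMk : M ≤ O / k)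
    (h : ΔO ≥ ((6 : ℝ) - k) * L / (2 * (7 * k + 2))) :
    2 * M + 7 * O ≤ 11 * L := by
  have hk' : (1 : ℝ) ≤ (k : ℝ) := by exact_mod_cast hk
  have hkpos : (0 : ℝ) < (k : ℝ) := by linarith
  have hM' : M * k ≤ O := (le_div_iff₀ hkpos).mp hMk
  have hden : (0 : ℝ) < 2 * (7 * (k : ℝ) + 2) := by nlinarith
  have h' : ((6 : ℝ) - k) * L ≤ ΔO * (2 * (7 * k + 2)) := by
    rw [ge_iff_le, div_le_iff₀ hden] at h; exact h
  nlinarith [mul_nonneg hΔO hkpos.le, mul_le_mul_of_nonneg_right hM' (by norm_num : (0:ℝ) ≤ 7)]
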